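/- arXiv:1311.2019 — 3 statements merged into one kernel-verified Lean document; each statement's English description precedes it below -/
import Mathlib

section
/- Let M ∈ ℤ^{3×3} be nonsingular. The lattice graph 𝒢(M) is linearly symmetric if and only if there exists a signed permutation matrix P of order 3 (P³ = I and P ≠ I) together with an integer matrix Q such that PM = MQ, i.e., a signed permutation of order 3 inducing an automorphism of 𝒢(M). -/
set_option maxRecDepth 10000


open Matrix

/-- The subgroup (submodule) `Mℤⁿ` generated by the columns of `M`. -/
def colSpan {ι : Type*} [Fintype ι] [DecidableEq ι] (M : Matrix ι ι ℤ) :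
    Submodule ℤ (ι → ℤ) :=
  LinearMap.range M.mulVecLin

/-- The vertex set `ℤⁿ/Mℤⁿ` of the lattice graph. -/
abbrev LatticeVertex {ι : Type*} [Fintype ι] [DecidableEq ι] (M : Matrix ι ι ℤ) :=
  (ι → ℤ) ⧸ colSpan M

/-- The `i`-th standard basis vector of `ℤⁿ`. -/
def stdBasis {ι : Type*} [DecidableEq ι] (i : ι) : ι → ℤ := Pi.single i 1

/-- The lattice graph `𝒢(M)`. -/
def latticeGraph {ι : Type*} [Fintype ι] [DecidableEq ι] (M : Matrix ι ι ℤ) :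
    SimpleGraph (LatticeVertex M) where
  Adj v w := v ≠ w ∧ ∃ i : ι,
      v - w = Submodule.Quotient.mk (stdBasis i) ∨
      w - v = Submodule.Quotient.mk (stdBasis i)
  symm := ⟨by rintro v w ⟨hne, i, h⟩; exact ⟨hne.symm, i, h.symm⟩⟩
  loopless := ⟨fun v h => h.1 rfl⟩

/-- The subgraph of `𝒢(M)` spanned by the directions in `S`. -/
def spannedSubgraph {ι : Type*} [Fintype ι] [DecidableEq ι] (M : Matrix ι ι ℤ) (S : Set ι) :
    SimpleGraph (AddSubgroup.closure
      ((fun i => (Submodule.Quotient.mk (stdBasis i) : LatticeVertex M)) '' S)) where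
  Adj v w := v ≠ w ∧ ∃ i ∈ S,
      (v : LatticeVertex M) - (w : LatticeVertex M) = Submodule.Quotient.mk (stdBasis i) ∨
      (w : LatticeVertex M) - (v : LatticeVertex M) = Submodule.Quotient.mk (stdBasis i)
  symm := ⟨by rintro v w ⟨hne, i, hiS, h⟩; exact ⟨hne.symm, i, hiS, h.symm⟩⟩
  loopless := ⟨fun v h => h.1 rfl⟩

/-- The projection of `𝒢(M)` over `e_j`: the subgraph spanned by all other directions. -/
def projGraph {ι : Type*} [Fintype ι] [DecidableEq ι] (M : Matrix ι ι ℤ) (j : ι) :=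
  spannedSubgraph M {i | i ≠ j}

/-- The torus graph `T(a₁,…,aₙ)`. -/
def torusGraph {n : ℕ} (a : Fin n → ℕ) : SimpleGraph (∀ i, ZMod (a i)) where
  Adj x y := x ≠ y ∧ ∃ i, (∀ j, j ≠ i → x j = y j) ∧ (x i = y i + 1 ∨ y i = x i + 1)
  symm := ⟨by
    rintro x y ⟨hne, i, hj, h⟩
    exact ⟨hne.symm, i, fun j hji => (hj j hji).symm, h.symm⟩⟩
  loopless := ⟨fun x h => h.1 rfl⟩

/-- A signed permutation matrix: exactly one nonzero entry, equal to `±1`,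
in each row and each column. -/
def IsSignedPerm {n : ℕ} (P : Matrix (Fin n) (Fin n) ℤ) : Prop :=
  (∀ i j, P i j = 0 ∨ P i j = 1 ∨ P i j = -1) ∧
  (∀ i, ∃! j, P i j ≠ 0) ∧ (∀ j, ∃! i, P i j ≠ 0)

/-- `𝒢(M)` is linearly symmetric: for every `i` there is a signed permutation matrix
inducing an automorphism of `𝒢(M)` sending `e₁` to `±e_i`. -/
def IsLinearlySymmetric {n : ℕ} (M : Matrix (Fin n) (Fin n) ℤ) : Prop :=
  ∀ i : Fin n, ∃ P : Matrix (Fin n) (Fin n) ℤ, IsSignedPerm P ∧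
    (∃ Q : Matrix (Fin n) (Fin n) ℤ, P * M = M * Q) ∧
    (P.mulVec (stdBasis (⟨0, i.pos⟩ : Fin n)) = stdBasis i ∨
      P.mulVec (stdBasis (⟨0, i.pos⟩ : Fin n)) = -stdBasis i)

def toMat (σ : Equiv.Perm (Fin 3)) (s : Fin 3 → ℤˣ) : Matrix (Fin 3) (Fin 3) ℤ :=
  Matrix.of fun i j => if i = σ j then (s j : ℤ) else 0

lemma toMat_signed (σ : Equiv.Perm (Fin 3)) (s : Fin 3 → ℤˣ) : IsSignedPerm (toMat σ s) := by
  refine ⟨fun i j => ?_, fun i => ⟨σ.symm i, ?_, fun j hj => ?_⟩, fun j => ⟨σ j, ?_, fun i hi => ?_⟩⟩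
  · by_cases h : i = σ j
    · rcases Int.units_eq_one_or (s j) with h' | h' <;> simp [toMat, h, h']
    · simp [toMat, h]
  · simp [toMat]
  · by_contra h
    apply hj
    simp only [toMat, of_apply, ite_eq_right_iff] at *
    intro hi; exact absurd (by rw [hi]; simp) h
  · simp [toMat]
  · by_contra h
    apply hi
    simp only [toMat, of_apply] at *
    rw [if_neg h]

lemma toMat_mul (σ τ : Equiv.Perm (Fin 3)) (s t : Fin 3 → ℤˣ) :
    toMat σ s * toMat τ t = toMat (σ * τ) (fun j => s (τ j) * t j) := by
  ext i j
  simp only [toMat, Matrix.mul_apply, of_apply, ite_mul, zero_mul, mul_ite, mul_zero]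
  rw [Finset.sum_ite_eq' Finset.univ (τ j)]
  simp [Equiv.Perm.mul_apply, Units.val_mul]
  split_ifs <;> split_ifs <;> simp_all

lemma toMat_inj {σ τ : Equiv.Perm (Fin 3)} {s t : Fin 3 → ℤˣ} (h : toMat σ s = toMat τ t) :
    σ = τ ∧ s = t := by
  have hperm : σ = τ := by
    by_contra hne
    obtain ⟨j, hj⟩ : ∃ j, σ j ≠ τ j := by
      by_contra h'
      push_neg at h'
      exact hne (Equiv.ext h')
    have := congrFun (congrFun h (σ j)) j
    simp only [toMat, of_apply, if_pos rfl, if_neg hj, if_true] at this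
    exact (s j).ne_zero this
  refine ⟨hperm, funext fun j => Units.ext ?_⟩
  have := congrFun (congrFun h (σ j)) j
  simp only [toMat, of_apply, if_pos rfl, hperm, if_true] at this
  exact this

lemma toMat_one : toMat 1 (fun _ => 1) = 1 := by
  ext i j
  simp [toMat, Matrix.one_apply, eq_comm]
  split_ifs <;> split_ifs <;> simp_all

lemma toMat_mulVec (σ : Equiv.Perm (Fin 3)) (s : Fin 3 → ℤˣ) (j : Fin 3) :
    (toMat σ s).mulVec (stdBasis j) = (s j : ℤ) • stdBasis (σ j) := by
  funext i
  simp only [toMat, Matrix.mulVec, dotProduct, of_apply, _root_.stdBasis, Pi.single_apply,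
    mul_ite, ite_mul, mul_zero, zero_mul, mul_one, Pi.smul_apply, smul_eq_mul]
  rw [Finset.sum_ite_eq' Finset.univ j]
  simp [eq_comm]

lemma signed_toMat {P : Matrix (Fin 3) (Fin 3) ℤ} (hP : IsSignedPerm P) :
    ∃ σ s, P = toMat σ s := by
  obtain ⟨hent, hrow, hcol⟩ := hP
  choose f hf hfu using hcol
  have hinj : Function.Injective f := by
    intro a b hab
    obtain ⟨j, _, hju⟩ := hrow (f a)
    have hb : P (f a) b ≠ 0 := by rw [hab]; exact hf b
    exact (hju a (hf a)).trans (hju b hb).symm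
  let σ : Equiv.Perm (Fin 3) := Equiv.ofBijective f (Finite.injective_iff_bijective.mp hinj)
  have hσ : ∀ j, σ j = f j := fun j => rfl
  refine ⟨σ, fun j => if P (f j) j = 1 then 1 else -1, ?_⟩
  ext i j
  by_cases h : i = f j
  · subst h
    rcases hent (f j) j with h' | h' | h'
    · exact absurd h' (hf j)
    · simp [toMat, hσ, h']
    · simp [toMat, hσ, h']
  · have h0 : P i j = 0 := by
      by_contra h'
      exact h (hfu j i h')
    rw [h0]
    simp [toMat, hσ, h]

lemma mulVec_target (σ : Equiv.Perm (Fin 3)) (s : Fin 3 → ℤˣ) (i : Fin 3)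
    (h : (toMat σ s).mulVec (stdBasis 0) = stdBasis i ∨
      (toMat σ s).mulVec (stdBasis 0) = -stdBasis i) : σ 0 = i := by
  rw [toMat_mulVec] at h
  by_contra hne
  rcases h with h | h <;>
  · have := congrFun h (σ 0)
    simp [_root_.stdBasis, Pi.single_apply, hne, (s 0).ne_zero] at this

lemma fact1 : ∀ σ₁ σ₂ : Equiv.Perm (Fin 3), σ₁ 0 = 1 → σ₂ 0 = 2 →
    (σ₁ ^ 3 = 1 ∧ σ₁ ≠ 1) ∨ (σ₂ ^ 3 = 1 ∧ σ₂ ≠ 1) ∨ ((σ₁ * σ₂) ^ 3 = 1 ∧ σ₁ * σ₂ ≠ 1) := by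
  decide

lemma fact2 : ∀ σ : Equiv.Perm (Fin 3), σ ^ 3 = 1 → σ ≠ 1 →
    ∀ i : Fin 3, i = 0 ∨ i = σ 0 ∨ i = σ (σ 0) := by
  decide

lemma toMat_congr_s {σ : Equiv.Perm (Fin 3)} {s t : Fin 3 → ℤˣ} (h : ∀ j, s j = t j) :
    toMat σ s = toMat σ t := by
  ext i j
  simp [toMat, h]

lemma key (M : Matrix (Fin 3) (Fin 3) ℤ) (σ : Equiv.Perm (Fin 3)) (s : Fin 3 → ℤˣ)
    (hσ3 : σ ^ 3 = 1) (hσ1 : σ ≠ 1) (Q : Matrix (Fin 3) (Fin 3) ℤ)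
    (hQ : toMat σ s * M = M * Q) :
    ∃ P : Matrix (Fin 3) (Fin 3) ℤ, IsSignedPerm P ∧ P ^ 3 = 1 ∧ P ≠ 1 ∧
      ∃ Q' : Matrix (Fin 3) (Fin 3) ℤ, P * M = M * Q' := by
  have hs : ∀ x, σ (σ (σ x)) = x := by
    intro x
    have := congrArg (fun e : Equiv.Perm (Fin 3) => e x) hσ3
    simpa [pow_succ, Equiv.Perm.mul_apply] using this
  have hC : toMat (σ * σ) (fun j => s (σ j) * s j) = toMat σ s * toMat σ s :=
    (toMat_mul σ σ s s).symm
  refine ⟨toMat (σ * σ) (fun j => s (σ j) * s j), toMat_signed _ _, ?_, ?_, Q * Q, ?_⟩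
  · simp only [pow_succ, pow_zero, one_mul, toMat_mul]
    have hπ : σ * σ * (σ * σ) * (σ * σ) = 1 := by
      rw [show σ * σ * (σ * σ) * (σ * σ) = σ ^ 3 * σ ^ 3 from by simp [pow_succ, mul_assoc], hσ3, mul_one]
    rw [hπ, ← toMat_one]
    refine toMat_congr_s fun j => ?_
    simp only [Equiv.Perm.mul_apply, hs]
    generalize s j = a
    generalize s (σ j) = b
    generalize s (σ (σ j)) = c
    revert a b c
    decide
  · intro h
    rw [← toMat_one] at h
    have h2 : σ * σ = 1 := (toMat_inj h).1
    apply hσ1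
    have : σ = σ ^ 3 * (σ * σ)⁻¹ := by group
    rw [hσ3, h2, inv_one, mul_one] at this
    exact this
  · rw [hC, mul_assoc, hQ, ← mul_assoc, hQ, mul_assoc]


/-- a 3-dimensional lattice graph is linearly symmetric iff some signed
permutation matrix of order 3 induces an automorphism of it. -/
theorem linearlySymmetric_iff_order_three (M : Matrix (Fin 3) (Fin 3) ℤ)
    (hM : M.det ≠ 0) :
    IsLinearlySymmetric M ↔
      ∃ P : Matrix (Fin 3) (Fin 3) ℤ, IsSignedPerm P ∧ P ^ 3 = 1 ∧ P ≠ 1 ∧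
        ∃ Q : Matrix (Fin 3) (Fin 3) ℤ, P * M = M * Q := by
  constructor
  · intro h
    obtain ⟨P₁, hP₁, ⟨Q₁, hQ₁⟩, hv₁⟩ := h 1
    obtain ⟨P₂, hP₂, ⟨Q₂, hQ₂⟩, hv₂⟩ := h 2
    obtain ⟨σ₁, s₁, rfl⟩ := signed_toMat hP₁
    obtain ⟨σ₂, s₂, rfl⟩ := signed_toMat hP₂
    have h1 : σ₁ 0 = 1 := mulVec_target σ₁ s₁ 1 hv₁
    have h2 : σ₂ 0 = 2 := mulVec_target σ₂ s₂ 2 hv₂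
    rcases fact1 σ₁ σ₂ h1 h2 with ⟨h3, h4⟩ | ⟨h3, h4⟩ | ⟨h3, h4⟩
    · exact key M σ₁ s₁ h3 h4 Q₁ hQ₁
    · exact key M σ₂ s₂ h3 h4 Q₂ hQ₂
    · refine key M (σ₁ * σ₂) (fun j => s₁ (σ₂ j) * s₂ j) h3 h4 (Q₁ * Q₂) ?_
      rw [← toMat_mul, mul_assoc, hQ₂, ← mul_assoc, hQ₁, mul_assoc]
  · rintro ⟨P, hP, hP3, hPne, Q, hQ⟩ i
    obtain ⟨σ, s, rfl⟩ := signed_toMat hP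
    rw [← toMat_one] at hP3
    simp only [pow_succ, pow_zero, one_mul, toMat_mul] at hP3
    obtain ⟨hperm, hsign⟩ := toMat_inj hP3
    have hσ3 : σ ^ 3 = 1 := by
      rw [pow_succ, pow_succ, pow_succ, pow_zero, one_mul]; exact hperm
    have hσne : σ ≠ 1 := by
      rintro rfl
      apply hPne
      have hs1 : s = fun _ => 1 := by
        funext j
        have := congrFun hsign j
        simp only [Equiv.Perm.one_apply] at this
        revert this
        generalize s j = a
        revert a
        decide
      rw [hs1, toMat_one]
    rcases fact2 σ hσ3 hσne i with rfl | rfl | rfl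
    · refine ⟨1, toMat_one ▸ toMat_signed 1 (fun _ => 1), ⟨1, by rw [one_mul, mul_one]⟩, Or.inl ?_⟩
      exact Matrix.one_mulVec _
    · refine ⟨toMat σ s, hP, ⟨Q, hQ⟩, ?_⟩
      have hmv : (toMat σ s).mulVec (stdBasis (⟨0, (σ 0).pos⟩ : Fin 3))
          = (s 0 : ℤ) • stdBasis (σ 0) := toMat_mulVec σ s 0
      rcases Int.units_eq_one_or (s 0) with h' | h'
      · left; rw [hmv, h']; simp
      · right; rw [hmv, h']; simp
    · refine ⟨toMat σ s * toMat σ s, ?_, ⟨Q * Q, ?_⟩, ?_⟩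
      · rw [toMat_mul]; exact toMat_signed _ _
      · rw [mul_assoc, hQ, ← mul_assoc, hQ, mul_assoc]
      · have hmv : (toMat σ s * toMat σ s).mulVec (stdBasis (⟨0, (σ (σ 0)).pos⟩ : Fin 3))
            = ((s (σ 0) * s 0 : ℤˣ) : ℤ) • stdBasis (σ (σ 0)) := by
          rw [toMat_mul]
          exact toMat_mulVec (σ * σ) (fun j => s (σ j) * s j) 0
        rcases Int.units_eq_one_or (s (σ 0) * s 0) with h' | h'
        · left; rw [hmv, h']; simp
        · right; rw [hmv, h']; simp
end

section
/- There are exactly two similarity classes of integer 3×3 matrices with characteristic polynomial X³ − 1: every A ∈ ℤ^{3×3} whose characteristic polynomial is X³ − 1 is similar over ℤ to Q₁ = [[1,0,0],[0,−1,1],[0,−1,0]] or to Q₂ = [[1,0,1],[0,−1,1],[0,−1,0]], and Q₁ and Q₂ are not similar to each other. -/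
open Matrix

/-- `A` and `B` are similar over `ℤ`: `AU = UB` for some unimodular `U`. -/
def SimilarZ (A B : Matrix (Fin 3) (Fin 3) ℤ) : Prop :=
  ∃ U : Matrix (Fin 3) (Fin 3) ℤ, IsUnit U.det ∧ A * U = U * B


section AuxiliaryLemmas
open Matrix Polynomial



/-- A positive definite binary quadratic form of discriminant `-3` represents `1`. -/
lemma bqf_rep_one : ∀ p : ℕ, ∀ q r : ℤ, 0 < p → q^2 - 4*(p:ℤ)*r = -3 →
    ∃ x y : ℤ, (p:ℤ)*x^2 + q*x*y + r*y^2 = 1 := by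
  intro p
  induction p using Nat.strong_induction_on with
  | _ p IH =>
    intro q r hp hd
    by_cases hp1 : p = 1
    · exact ⟨1, 0, by subst hp1; push_cast; linarith⟩
    · have hp2 : (2:ℤ) ≤ (p:ℤ) := by exact_mod_cast (by omega : 2 ≤ p)
      set P : ℤ := (p:ℤ) with hP
      have hPpos : 0 < P := by positivity
      set t : ℤ := (P - q) / (2*P) with ht
      set s : ℤ := (P - q) % (2*P) with hs
      have hdiv : 2*P*t + s = P - q := by rw [ht, hs]; exact Int.mul_ediv_add_emod _ _
      have hs0 : 0 ≤ s := Int.emod_nonneg _ (by positivity)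
      have hs1 : s < 2*P := Int.emod_lt_of_pos _ (by positivity)
      set q' : ℤ := q + 2*P*t with hq'
      have hq's : q' = P - s := by omega
      set r' : ℤ := P*t^2 + q*t + r with hr'
      have hd' : q'^2 - 4*P*r' = -3 := by rw [hq', hr']; linear_combination hd
      have hr'0 : 0 < r' := by nlinarith [sq_nonneg q']
      have hr'P : r' < P := by nlinarith [sq_nonneg q']
      obtain ⟨x, y, hxy⟩ := IH r'.toNat (by omega) q' P
        (by omega) (by push_cast [Int.toNat_of_nonneg hr'0.le]; linarith)
      rw [Int.toNat_of_nonneg hr'0.le] at hxy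
      refine ⟨y + t*x, x, ?_⟩
      rw [hq', hr'] at hxy
      linear_combination hxy

/-- Any 2×2 integer matrix with trace -1 and determinant 1 is conjugate to `!![-1,1;-1,0]`. -/
lemma two_two_conj (a b c d : ℤ) (htr : a + d = -1) (hdet : a*d - b*c = 1) :
    ∃ V : Matrix (Fin 2) (Fin 2) ℤ, IsUnit V.det ∧
      !![a, b; c, d] * V = V * !![-1, 1; -1, 0] := by
  have hbc : b*c = a*d - 1 := by linarith
  have hc : c ≠ 0 := by
    intro h0
    have hd2 : d = -1 - a := by linarith
    rw [h0, mul_zero, hd2] at hbc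
    nlinarith [sq_nonneg (2*a+1)]
  have key : ∃ x y e : ℤ, (e = 1 ∨ e = -1) ∧ c*x^2 + (d-a)*x*y - b*y^2 = e := by
    rcases lt_or_gt_of_ne hc with hneg | hpos
    · obtain ⟨x, y, hxy⟩ := bqf_rep_one (-c).toNat (a-d) b
        (by omega) (by push_cast [Int.toNat_of_nonneg (by omega : (0:ℤ) ≤ -c)]; nlinarith)
      rw [Int.toNat_of_nonneg (by omega : (0:ℤ) ≤ -c)] at hxy
      exact ⟨x, y, -1, Or.inr rfl, by linarith⟩
    · obtain ⟨x, y, hxy⟩ := bqf_rep_one c.toNat (d-a) (-b)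
        (by omega) (by push_cast [Int.toNat_of_nonneg hpos.le]; nlinarith)
      rw [Int.toNat_of_nonneg hpos.le] at hxy
      exact ⟨x, y, 1, Or.inl rfl, by linarith⟩
  obtain ⟨x, y, e, he, hxy⟩ := key
  refine ⟨!![a*x + b*y, x; c*x + d*y, y], ?_, ?_⟩
  · have : (!![a*x + b*y, x; c*x + d*y, y] : Matrix (Fin 2) (Fin 2) ℤ).det = -e := by
      rw [det_fin_two_of]; linarith
    rw [this]
    rcases he with h | h <;> rw [h] <;> [exact isUnit_one.neg; exact (by norm_num : IsUnit (1:ℤ))]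
  · ext i j
    fin_cases i <;> fin_cases j <;> simp [Matrix.mul_apply, Fin.sum_univ_two]
    · linear_combination (x*a + b*y)*htr + x*hbc
    · linear_combination (x*c + y*d)*htr + y*hbc

lemma complete_primitive (u : Fin 3 → ℤ)
    (h : Int.gcd (↑(Int.gcd (u 0) (u 1))) (u 2) = 1) :
    ∃ U : Matrix (Fin 3) (Fin 3) ℤ, IsUnit U.det ∧ ∀ i, U i 0 = u i := by
  set a := u 0 with ha
  set b := u 1 with hb
  set c := u 2 with hc
  by_cases hg : Int.gcd a b = 0
  · have hab : a = 0 ∧ b = 0 := Int.gcd_eq_zero_iff.mp hg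
    rw [hg] at h
    have hc1 : c = 1 ∨ c = -1 := by
      have h2 := Int.natAbs_eq c
      have : c.natAbs = 1 := by simpa [Int.gcd] using h
      omega
    refine ⟨!![0, 1, 0; 0, 0, 1; c, 0, 0], ?_, ?_⟩
    · have : (!![0, 1, 0; 0, 0, 1; c, 0, 0] : Matrix (Fin 3) (Fin 3) ℤ).det = c := by
        rw [det_fin_three]; simp
      rw [this]; exact Int.isUnit_iff.mpr hc1
    · intro i
      fin_cases i
      · exact hab.1.symm
      · exact hab.2.symm
      · rfl
  · set g : ℤ := (↑(Int.gcd a b) : ℤ) with hgdef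
    have hgne : g ≠ 0 := by
      rw [hgdef]
      exact_mod_cast hg
    have hga : g ∣ a := Int.gcd_dvd_left _ _
    have hgb : g ∣ b := Int.gcd_dvd_right _ _
    set a' := a / g with ha'
    set b' := b / g with hb'
    have haa : a = g * a' := (Int.mul_ediv_cancel' hga).symm
    have hbb : b = g * b' := (Int.mul_ediv_cancel' hgb).symm
    -- inner Bezout
    have hbez1 : g = a * Int.gcdA a b + b * Int.gcdB a b := Int.gcd_eq_gcd_ab a b
    set x := Int.gcdA a b with hx
    set y := Int.gcdB a b with hy
    have hbez1' : a' * x + b' * y = 1 := by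
      have hgg : g * (a' * x + b' * y) = g * 1 := by
        rw [mul_one]
        calc g * (a' * x + b' * y) = (g * a') * x + (g * b') * y := by ring
        _ = a * x + b * y := by rw [← haa, ← hbb]
        _ = g := hbez1.symm
      exact mul_left_cancel₀ hgne hgg
    -- outer Bezout
    have hbez2 : (1:ℤ) = g * Int.gcdA g c + c * Int.gcdB g c := by
      have := Int.gcd_eq_gcd_ab g c
      rw [hgdef] at this ⊢
      rw [h] at this
      exact_mod_cast this
    set z := Int.gcdA g c with hz
    set w := Int.gcdB g c with hw
    refine ⟨!![a, -y, -w * a'; b, x, -w * b'; c, 0, z], ?_, ?_⟩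
    · have hdet : (!![a, -y, -w * a'; b, x, -w * b'; c, 0, z] :
          Matrix (Fin 3) (Fin 3) ℤ).det = 1 := by
        rw [det_fin_three]
        simp
        linear_combination (-z)*hbez1 + c*w*hbez1' - hbez2
      rw [hdet]; exact isUnit_one
    · intro i; fin_cases i <;> simp <;> rfl

lemma SimilarZ.trans' {A B C : Matrix (Fin 3) (Fin 3) ℤ}
    (h1 : SimilarZ A B) (h2 : SimilarZ B C) : SimilarZ A C := by
  obtain ⟨U, hU, hAB⟩ := h1
  obtain ⟨V, hV, hBC⟩ := h2
  exact ⟨U * V, by rw [det_mul]; exact hU.mul hV,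
    by rw [← mul_assoc, hAB, mul_assoc, hBC, mul_assoc]⟩

def Mm (p q : ℤ) : Matrix (Fin 3) (Fin 3) ℤ := !![1, p, q; 0, -1, 1; 0, -1, 0]

lemma Mm_step (p q x₁ x₂ : ℤ) :
    SimilarZ (Mm p q) (Mm (p + 2*x₁ + x₂) (q - x₁ + x₂)) := by
  refine ⟨!![1, x₁, x₂; 0, 1, 0; 0, 0, 1], ?_, ?_⟩
  · have : (!![1, x₁, x₂; 0, 1, 0; 0, 0, 1] : Matrix (Fin 3) (Fin 3) ℤ).det = 1 := by
      rw [det_fin_three]; simp [Matrix.vecHead, Matrix.vecTail]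
    rw [this]; exact isUnit_one
  · ext i j
    fin_cases i <;> fin_cases j <;>
      simp [Mm, Matrix.mul_apply, Fin.sum_univ_three, Matrix.vecHead, Matrix.vecTail] <;> ring

lemma Mm_sign (p q : ℤ) : SimilarZ (Mm p q) (Mm (-p) (-q)) := by
  refine ⟨!![-1, 0, 0; 0, 1, 0; 0, 0, 1], ?_, ?_⟩
  · have : (!![-1, 0, 0; 0, 1, 0; 0, 0, 1] : Matrix (Fin 3) (Fin 3) ℤ).det = -1 := by
      rw [det_fin_three]; simp [Matrix.vecHead, Matrix.vecTail]
    rw [this]; exact isUnit_one.neg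
  · ext i j
    fin_cases i <;> fin_cases j <;>
      simp [Mm, Matrix.mul_apply, Fin.sum_univ_three, Matrix.vecHead, Matrix.vecTail]

lemma Mm_classify (p q : ℤ) : SimilarZ (Mm p q) (Mm 0 0) ∨ SimilarZ (Mm p q) (Mm 0 1) := by
  set k : ℤ := (q - p) % 3 with hk
  set x₁ : ℤ := (q - p) / 3 with hx₁
  have hdm : 3 * x₁ + k = q - p := by rw [hk, hx₁]; exact Int.mul_ediv_add_emod _ _
  have hk0 : 0 ≤ k := Int.emod_nonneg _ (by norm_num)
  have hk3 : k < 3 := Int.emod_lt_of_pos _ (by norm_num)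
  have hstep := Mm_step p q x₁ (-p - 2*x₁)
  have h1 : p + 2*x₁ + (-p - 2*x₁) = 0 := by ring
  have h2 : q - x₁ + (-p - 2*x₁) = k := by omega
  rw [h1, h2] at hstep
  interval_cases k
  · exact Or.inl hstep
  · exact Or.inr hstep
  · refine Or.inr (hstep.trans' ((Mm_sign 0 2).trans' ?_))
    have h3 := Mm_step 0 (-2) (-1) 2
    norm_num at h3
    exact h3

/-- Main reduction: every `A` with charpoly `X³-1` is similar to some `Mm p q`. -/
lemma reduce_to_Mm (A : Matrix (Fin 3) (Fin 3) ℤ) (hA : A.charpoly = X ^ 3 - 1) :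
    ∃ p q : ℤ, SimilarZ A (Mm p q) := by
  -- trace and determinant
  have htrA : A.trace = 0 := by
    have h := Matrix.trace_eq_neg_charpoly_coeff A
    rw [hA] at h
    simpa [Polynomial.coeff_one, Polynomial.coeff_X_pow] using h
  have hdetA : A.det = 1 := by
    have h := Matrix.det_eq_sign_charpoly_coeff A
    rw [hA] at h
    simpa [Polynomial.coeff_one, Polynomial.coeff_X_pow] using h
  -- fixed vector
  have hdet1A : ((1 : Matrix (Fin 3) (Fin 3) ℤ) - A).det = 0 := by
    have h := eval_det (charmatrix A) 1
    rw [matPolyEquiv_charmatrix] at h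
    rw [show (charmatrix A).det = A.charpoly from rfl, hA] at h
    simpa using h.symm
  have hdetA1 : (A - 1).det = 0 := by
    rw [← neg_sub (1 : Matrix (Fin 3) (Fin 3) ℤ) A, Matrix.det_neg, hdet1A]
    ring
  obtain ⟨v, hv0, hv⟩ := Matrix.exists_mulVec_eq_zero_iff.mpr hdetA1
  have hAv : A.mulVec v = v := by
    have h1 : (A - 1).mulVec v = A.mulVec v - v := by
      rw [Matrix.sub_mulVec, Matrix.one_mulVec]
    rw [hv] at h1
    exact (sub_eq_zero.mp h1.symm)
  -- primitive fixed vector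
  set g : ℕ := Int.gcd (↑(Int.gcd (v 0) (v 1))) (v 2) with hgdef
  have hgne : (g:ℤ) ≠ 0 := by
    intro h0
    apply hv0
    have h0' : g = 0 := by exact_mod_cast h0
    rw [hgdef] at h0'
    obtain ⟨h1, h2⟩ := Int.gcd_eq_zero_iff.mp h0'
    obtain ⟨h3, h4⟩ := Int.gcd_eq_zero_iff.mp (by exact_mod_cast h1 : Int.gcd (v 0) (v 1) = 0)
    funext i
    fin_cases i <;> assumption
  have hgdvd : ∀ i, (g:ℤ) ∣ v i := by
    intro i
    fin_cases i
    · exact dvd_trans (Int.gcd_dvd_left _ _) (Int.gcd_dvd_left _ _)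
    · exact dvd_trans (Int.gcd_dvd_left _ _) (Int.gcd_dvd_right _ _)
    · exact Int.gcd_dvd_right _ _
  set u : Fin 3 → ℤ := fun i => v i / (g:ℤ) with hu
  have hvu : ∀ i, v i = (g:ℤ) * u i := fun i => (Int.mul_ediv_cancel' (hgdvd i)).symm
  have hAu : A.mulVec u = u := by
    funext i
    have h5 : (A.mulVec v) i = v i := congrFun hAv i
    simp only [Matrix.mulVec, dotProduct, Fin.sum_univ_three] at h5 ⊢
    rw [hvu 0, hvu 1, hvu 2, hvu i] at h5
    apply mul_left_cancel₀ hgne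
    linear_combination h5
  have hprim : Int.gcd (↑(Int.gcd (u 0) (u 1))) (u 2) = 1 := by
    have h1 : Int.gcd (v 0) (v 1) = g * Int.gcd (u 0) (u 1) := by
      rw [hvu 0, hvu 1, Int.gcd_mul_left]
      simp
    have hgpos : 0 < g := Nat.pos_of_ne_zero (by exact_mod_cast hgne)
    have h2 : g * Int.gcd (↑(Int.gcd (u 0) (u 1))) (u 2) = g * 1 := by
      rw [mul_one, hgdef]
      conv_rhs => rw [hvu 2, h1]
      push_cast
      rw [Int.gcd_mul_left]
      simp
      exact Or.inl hgdef.symm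
    exact Nat.eq_of_mul_eq_mul_left hgpos h2
  obtain ⟨U₀, hU₀det, hU₀col⟩ := complete_primitive u hprim
  haveI : Invertible U₀ := U₀.invertibleOfIsUnitDet hU₀det
  obtain ⟨A', hA'def⟩ : ∃ X : Matrix (Fin 3) (Fin 3) ℤ, X = ⅟U₀ * A * U₀ := ⟨_, rfl⟩
  have hAU₀ : A * U₀ = U₀ * A' := by
    rw [hA'def, ← mul_assoc, ← mul_assoc, mul_invOf_self, one_mul]
  -- column of A'
  have hU₀e : U₀.mulVec (Pi.single 0 1) = u := by
    rw [Matrix.mulVec_single]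
    funext i
    rw [MulOpposite.op_one, one_smul]
    exact hU₀col i
  have hA'e : A'.mulVec (Pi.single 0 1) = Pi.single 0 1 := by
    have h6 : U₀.mulVec (A'.mulVec (Pi.single 0 1)) = U₀.mulVec (Pi.single 0 1) := by
      rw [Matrix.mulVec_mulVec, ← hAU₀, ← Matrix.mulVec_mulVec, hU₀e, hAu]
    have h8 : ∀ w : Fin 3 → ℤ, (⅟U₀).mulVec (U₀.mulVec w) = w := by
      intro w
      rw [Matrix.mulVec_mulVec, invOf_mul_self, Matrix.one_mulVec]
    calc A'.mulVec (Pi.single 0 1)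
        = (⅟U₀).mulVec (U₀.mulVec (A'.mulVec (Pi.single 0 1))) := (h8 _).symm
      _ = (⅟U₀).mulVec (U₀.mulVec (Pi.single 0 1)) := by rw [h6]
      _ = Pi.single 0 1 := h8 _
  have hA'00 : A' 0 0 = 1 := by simpa [Matrix.mulVec_single] using congrFun hA'e 0
  have hA'10 : A' 1 0 = 0 := by simpa [Matrix.mulVec_single] using congrFun hA'e 1
  have hA'20 : A' 2 0 = 0 := by simpa [Matrix.mulVec_single] using congrFun hA'e 2
  -- trace and det of A'
  have htrA' : A'.trace = 0 := by
    rw [hA'def, Matrix.trace_mul_comm (⅟U₀ * A) U₀, ← mul_assoc, mul_invOf_self, one_mul, htrA]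
  have hdetinv : (⅟U₀).det * U₀.det = 1 := by
    rw [← det_mul, invOf_mul_self, det_one]
  have hdetA' : A'.det = 1 := by
    have h8 : A'.det = (⅟U₀).det * A.det * U₀.det := by rw [hA'def, det_mul, det_mul]
    rw [h8, hdetA]
    linear_combination hdetinv
  have htr2 : A' 1 1 + A' 2 2 = -1 := by
    rw [Matrix.trace_fin_three] at htrA'
    rw [hA'00] at htrA'
    linarith
  have hdet2 : A' 1 1 * A' 2 2 - A' 1 2 * A' 2 1 = 1 := by
    rw [Matrix.det_fin_three, hA'00, hA'10, hA'20] at hdetA'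
    linear_combination hdetA'
  obtain ⟨V, hVdet, hBV⟩ := two_two_conj (A' 1 1) (A' 1 2) (A' 2 1) (A' 2 2) htr2 hdet2
  have E := fun i j => Matrix.ext_iff.mpr hBV i j
  have E00 := E 0 0; have E01 := E 0 1; have E10 := E 1 0; have E11 := E 1 1
  simp [Matrix.mul_apply, Fin.sum_univ_two] at E00 E01 E10 E11
  set T : Matrix (Fin 3) (Fin 3) ℤ :=
    !![1, 0, 0; 0, V 0 0, V 0 1; 0, V 1 0, V 1 1] with hTdef
  have hTdet : IsUnit T.det := by
    have h9 : T.det = V.det := by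
      rw [hTdef, det_fin_three, det_fin_two]
      simp [Matrix.vecHead, Matrix.vecTail] <;> ring
    rw [h9]
    exact hVdet
  have hA'eta : A' = !![1, A' 0 1, A' 0 2; 0, A' 1 1, A' 1 2; 0, A' 2 1, A' 2 2] := by
    have h10 := Matrix.eta_fin_three A'
    rw [hA'00, hA'10, hA'20] at h10
    exact h10
  have hstep : A' * T = T * Mm (A' 0 1 * V 0 0 + A' 0 2 * V 1 0)
      (A' 0 1 * V 0 1 + A' 0 2 * V 1 1) := by
    rw [hA'eta, hTdef]
    ext i j
    fin_cases i <;> fin_cases j <;>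
      simp [Mm, Matrix.mul_apply, Fin.sum_univ_three, Matrix.vecHead, Matrix.vecTail]
    · linear_combination E00
    · linear_combination E01
    · linear_combination E10
    · linear_combination E11
  refine ⟨A' 0 1 * V 0 0 + A' 0 2 * V 1 0, A' 0 1 * V 0 1 + A' 0 2 * V 1 1,
    ⟨U₀ * T, ?_, ?_⟩⟩
  · rw [det_mul]
    exact hU₀det.mul hTdet
  · rw [← mul_assoc, hAU₀, mul_assoc, hstep, ← mul_assoc]

lemma not_sim : ¬ SimilarZ !![1, 0, 0; 0, -1, 1; 0, -1, 0] !![1, 0, 1; 0, -1, 1; 0, -1, 0] := by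
  rintro ⟨U, hUdet, hU⟩
  have h2 : !![1, 0, 0; 0, -1, 1; 0, -1, 0] * (!![1, 0, 0; 0, -1, 1; 0, -1, 0] * U)
      = U * (!![1, 0, 1; 0, -1, 1; 0, -1, 0] * !![1, 0, 1; 0, -1, 1; 0, -1, 0]) := by
    rw [hU, ← mul_assoc, hU, mul_assoc]
  have e01 := Matrix.ext_iff.mpr hU 0 1
  have e11 := Matrix.ext_iff.mpr hU 1 1
  have e21 := Matrix.ext_iff.mpr hU 2 1
  have f01 := Matrix.ext_iff.mpr h2 0 1
  have f11 := Matrix.ext_iff.mpr h2 1 1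
  have f21 := Matrix.ext_iff.mpr h2 2 1
  simp [Matrix.mul_apply, Fin.sum_univ_three, Matrix.vecHead, Matrix.vecTail,
    Matrix.vecMul, dotProduct]
    at e01 e11 e21 f01 f11 f21
  have hcol : (3:ℤ) ∣ U 0 0 ∧ (3:ℤ) ∣ U 1 0 ∧ (3:ℤ) ∣ U 2 0 := by omega
  have hdvd : (3:ℤ) ∣ U.det := by
    rw [det_fin_three]
    obtain ⟨⟨a, ha⟩, ⟨b, hb⟩, ⟨c, hc⟩⟩ := hcol
    rw [ha, hb, hc]
    exact ⟨a * U 1 1 * U 2 2 - a * U 1 2 * U 2 1 - U 0 1 * (b * U 2 2) + U 0 1 * U 1 2 * c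
      + U 0 2 * (b * U 2 1) - U 0 2 * U 1 1 * c, by ring⟩
  have := Int.isUnit_iff.mp hUdet
  omega

end AuxiliaryLemmas

open Polynomial in
/-- there are exactly two similarity classes of integer `3×3` matrices with
characteristic polynomial `X³ - 1`. -/
theorem similarity_classes_charpoly_X_cubed_sub_one :
    (∀ A : Matrix (Fin 3) (Fin 3) ℤ, A.charpoly = X ^ 3 - 1 →
      SimilarZ A !![1, 0, 0; 0, -1, 1; 0, -1, 0] ∨
      SimilarZ A !![1, 0, 1; 0, -1, 1; 0, -1, 0]) ∧
    ¬ SimilarZ !![1, 0, 0; 0, -1, 1; 0, -1, 0] !![1, 0, 1; 0, -1, 1; 0, -1, 0] := by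
  constructor
  · intro A hA
    obtain ⟨p, q, hApq⟩ := reduce_to_Mm A hA
    have hQ1 : Mm 0 0 = !![1, 0, 0; 0, -1, 1; 0, -1, 0] := rfl
    have hQ2 : Mm 0 1 = !![1, 0, 1; 0, -1, 1; 0, -1, 0] := rfl
    rcases Mm_classify p q with h | h
    · exact Or.inl (hQ1 ▸ hApq.trans' h)
    · exact Or.inr (hQ2 ▸ hApq.trans' h)
  · exact not_sim
end

section
/- Let M ∈ ℤ^{n×n} be nonsingular and suppose the lattice graph 𝒢(M) has no nontrivial 4-cycles, i.e., whenever a, b, c, d ∈ {±e₁,…,±eₙ} satisfy a + b + c + d ≡ 0 (mod M), then b = −a or c = −a or d = −a. Then every graph automorphism φ of 𝒢(M) with φ(0) = 0 is an automorphism of the additive group ℤⁿ/Mℤⁿ, i.e., φ(x + y) = φ(x) + φ(y) for all x, y ∈ ℤⁿ/Mℤⁿ. -/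
open Matrix

def IsSgn {n : ℕ} (a : Fin n → ℤ) : Prop :=
  ∃ i, a = _root_.stdBasis i ∨ a = -_root_.stdBasis i

lemma IsSgn.neg {n : ℕ} {a : Fin n → ℤ} (h : IsSgn a) : IsSgn (-a) := by
  obtain ⟨i, h | h⟩ := h
  · exact ⟨i, Or.inr (by rw [h])⟩
  · exact ⟨i, Or.inl (by rw [h, neg_neg])⟩

lemma IsSgn.ne_neg {n : ℕ} {a : Fin n → ℤ} (h : IsSgn a) : a ≠ -a := by
  obtain ⟨i, h | h⟩ := h <;> subst h <;> intro hc <;>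
    · have := congrFun hc i
      simp [_root_.stdBasis] at this

def SS {n : ℕ} (M : Matrix (Fin n) (Fin n) ℤ) : Set (LatticeVertex M) :=
  {g | ∃ a, IsSgn a ∧ g = Submodule.Quotient.mk a}

section WithM
variable {n : ℕ} {M : Matrix (Fin n) (Fin n) ℤ}
  (h4 : ∀ a b c d : Fin n → ℤ, IsSgn a → IsSgn b → IsSgn c → IsSgn d →
      a + b + c + d ∈ colSpan M → b = -a ∨ c = -a ∨ d = -a)

include h4 in
lemma sgn_not_mem {a : Fin n → ℤ} (ha : IsSgn a) : a ∉ colSpan M := by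
  intro hmem
  have h44 : a + a + a + a ∈ colSpan M := add_mem (add_mem (add_mem hmem hmem) hmem) hmem
  rcases h4 a a a a ha ha ha ha h44 with h | h | h <;> exact ha.ne_neg h

include h4 in
lemma sgn_two_not_mem {a : Fin n → ℤ} (ha : IsSgn a) : a + a ∉ colSpan M := by
  intro hmem
  have h44 : a + a + a + a ∈ colSpan M := by
    have := add_mem hmem hmem
    rwa [show a + a + (a + a) = a + a + a + a by abel] at this
  rcases h4 a a a a ha ha ha ha h44 with h | h | h <;> exact ha.ne_neg h

lemma SS.negmem {s : LatticeVertex M} (hs : s ∈ SS M) : -s ∈ SS M := by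
  obtain ⟨a, ha, rfl⟩ := hs
  exact ⟨-a, ha.neg, (Submodule.Quotient.mk_neg _).symm⟩

include h4 in
lemma SS.ne_zero {s : LatticeVertex M} (hs : s ∈ SS M) : s ≠ 0 := by
  obtain ⟨a, ha, rfl⟩ := hs
  rw [Ne, Submodule.Quotient.mk_eq_zero]
  exact sgn_not_mem h4 ha

include h4 in
lemma SS.add_self_ne_zero {s : LatticeVertex M} (hs : s ∈ SS M) : s + s ≠ 0 := by
  obtain ⟨a, ha, rfl⟩ := hs
  rw [← Submodule.Quotient.mk_add, Ne, Submodule.Quotient.mk_eq_zero]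
  exact sgn_two_not_mem h4 ha

lemma adj_iff {v w : LatticeVertex M} :
    (latticeGraph M).Adj v w ↔ v ≠ w ∧ v - w ∈ SS M := by
  constructor
  · rintro ⟨hne, i, h | h⟩
    · exact ⟨hne, _root_.stdBasis i, ⟨i, Or.inl rfl⟩, h⟩
    · refine ⟨hne, -_root_.stdBasis i, ⟨i, Or.inr rfl⟩, ?_⟩
      rw [Submodule.Quotient.mk_neg, ← h]; abel
  · rintro ⟨hne, a, ⟨i, rfl | rfl⟩, h⟩
    · exact ⟨hne, i, Or.inl h⟩
    · refine ⟨hne, i, Or.inr ?_⟩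
      rw [show w - v = -(v - w) by abel, h, Submodule.Quotient.mk_neg, neg_neg]

include h4 in
lemma key_s19 {s t s' t' : LatticeVertex M}
    (hs : s ∈ SS M) (ht : t ∈ SS M) (hs' : s' ∈ SS M) (ht' : t' ∈ SS M)
    (heq : s + t = s' + t') (hne : t ≠ -s) : s' = s ∨ t' = s := by
  obtain ⟨a, ha, rfl⟩ := hs
  obtain ⟨b, hb, rfl⟩ := ht
  obtain ⟨a', ha', rfl⟩ := hs'
  obtain ⟨b', hb', rfl⟩ := ht'
  have hmem : a + b + -a' + -b' ∈ colSpan M := by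
    rw [← Submodule.Quotient.mk_add, ← Submodule.Quotient.mk_add] at heq
    have := (Submodule.Quotient.eq (colSpan M)).mp heq
    rwa [show a + b - (a' + b') = a + b + -a' + -b' by abel] at this
  rcases h4 a b (-a') (-b') ha hb ha'.neg hb'.neg hmem with h | h | h
  · exact absurd (by rw [h, Submodule.Quotient.mk_neg]) hne
  · left; rw [neg_inj.mp h]
  · right; rw [neg_inj.mp h]

lemma gen_SS (x : LatticeVertex M) : x ∈ AddSubgroup.closure (SS M) := by
  obtain ⟨v, rfl⟩ := Submodule.Quotient.mk_surjective (colSpan M) x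
  have hv : v = ∑ i, v i • _root_.stdBasis i := by
    rw [← Finset.univ_sum_single v]
    congr 1; funext i; funext j
    simp [_root_.stdBasis, Pi.single_apply, mul_ite]
  rw [hv, show (Submodule.Quotient.mk (∑ i, v i • _root_.stdBasis i) : LatticeVertex M)
      = ∑ i, v i • (Submodule.Quotient.mk (_root_.stdBasis i) : LatticeVertex M) by
    rw [← Submodule.mkQ_apply, map_sum]
    refine Finset.sum_congr rfl fun i _ => ?_
    rw [Submodule.mkQ_apply, Submodule.Quotient.mk_smul]]
  exact sum_mem (fun i _ => AddSubgroup.zsmul_mem _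
    (AddSubgroup.subset_closure
      (show (Submodule.Quotient.mk (_root_.stdBasis i) : LatticeVertex M) ∈ SS M from
        ⟨_root_.stdBasis i, ⟨i, Or.inl rfl⟩, rfl⟩)) (v i))

end WithM

/-- if `𝒢(M)` has no nontrivial 4-cycles, then every graph automorphism
fixing `0` is an automorphism of the group `ℤⁿ/Mℤⁿ`. -/
theorem automorphism_additive_of_no_nontrivial_four_cycles {n : ℕ}
    (M : Matrix (Fin n) (Fin n) ℤ) (hM : M.det ≠ 0)
    (h4 : ∀ a b c d : Fin n → ℤ,
      (∃ i, a = _root_.stdBasis i ∨ a = -_root_.stdBasis i) →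
      (∃ i, b = _root_.stdBasis i ∨ b = -_root_.stdBasis i) →
      (∃ i, c = _root_.stdBasis i ∨ c = -_root_.stdBasis i) →
      (∃ i, d = _root_.stdBasis i ∨ d = -_root_.stdBasis i) →
      a + b + c + d ∈ colSpan M → b = -a ∨ c = -a ∨ d = -a) :
    ∀ φ : latticeGraph M ≃g latticeGraph M, φ 0 = 0 →
      ∀ x y : LatticeVertex M, φ (x + y) = φ x + φ y := by
  intro φ hφ0
  -- Step A: local differences lie in S
  have hA : ∀ (x : LatticeVertex M) {s}, s ∈ SS M → φ (x + s) - φ x ∈ SS M := by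
    intro x s hs
    have hadj : (latticeGraph M).Adj (x + s) x := by
      refine adj_iff.mpr ⟨?_, ?_⟩
      · intro h
        exact SS.ne_zero h4 hs (by rwa [add_eq_left] at h)
      · rwa [add_sub_cancel_left]
    have h2 : (latticeGraph M).Adj (φ (x + s)) (φ x) :=
      (SimpleGraph.Iso.map_adj_iff φ).mpr hadj
    exact (adj_iff.mp h2).2
  -- Step B: transverse shifts preserve local differences
  have hB : ∀ (x : LatticeVertex M) {s t}, s ∈ SS M → t ∈ SS M → t ≠ s → t ≠ -s →
      φ (x + t + s) - φ (x + t) = φ (x + s) - φ x := by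
    intro x s t hs ht hts htns
    have hCm : φ (x + t) - φ x ∈ SS M := hA x ht
    have hDm : φ (x + t + s) - φ (x + t) ∈ SS M := hA (x + t) hs
    have hAm : φ (x + s) - φ x ∈ SS M := hA x hs
    have hBm : φ (x + s + t) - φ (x + s) ∈ SS M := hA (x + s) ht
    have heq : (φ (x + t + s) - φ (x + t)) + (φ (x + t) - φ x)
        = (φ (x + s + t) - φ (x + s)) + (φ (x + s) - φ x) := by
      rw [show x + s + t = x + t + s by abel]; abel
    have hne : (φ (x + t) - φ x) ≠ -(φ (x + t + s) - φ (x + t)) := by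
      intro h
      have h1 : φ (x + t + s) = φ x := by
        have h2 : φ (x + t + s) - φ x = 0 := by
          rw [show φ (x + t + s) - φ x
              = (φ (x + t + s) - φ (x + t)) + (φ (x + t) - φ x) by abel, h]
          abel
        exact sub_eq_zero.mp h2
      have h3 : x + t + s = x := φ.injective h1
      apply htns
      have h0 : t + s = 0 := by
        have := h3; rwa [add_assoc, add_eq_left] at this
      exact eq_neg_of_add_eq_zero_left h0
    rcases key_s19 h4 hDm hCm hBm hAm heq hne with h | h
    · -- B = D forces C = A, i.e. φ(x+t) = φ(x+s), i.e. t = s, contradiction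
      exfalso
      rw [← h] at heq
      have hCA : φ (x + t) - φ x = φ (x + s) - φ x := add_left_cancel heq
      exact hts (add_left_cancel (φ.injective (sub_left_inj.mp hCA)))
    · exact h.symm
  -- Step C: parallel shifts preserve local differences
  have hC : ∀ (x : LatticeVertex M) {s}, s ∈ SS M →
      φ (x + s + s) - φ (x + s) = φ (x + s) - φ x := by
    intro x s hs
    have hd0S : φ (x + s) - φ x ∈ SS M := hA x hs
    have hd1S : φ (x + s + s) - φ (x + s) ∈ SS M := hA (x + s) hs
    have hz1 : (latticeGraph M).Adj (φ x + (φ (x + s + s) - φ (x + s))) (φ x) := by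
      refine adj_iff.mpr ⟨?_, ?_⟩
      · intro h
        exact SS.ne_zero h4 hd1S (by rwa [add_eq_left] at h)
      · rwa [add_sub_cancel_left]
    have hz2 : (latticeGraph M).Adj (φ (x + s + s)) (φ x + (φ (x + s + s) - φ (x + s))) := by
      refine adj_iff.mpr ⟨?_, ?_⟩
      · intro h
        have h0 : φ (x + s) - φ x = 0 := by
          rw [show (0 : LatticeVertex M) = φ (x + s + s) - (φ x + (φ (x + s + s) - φ (x + s)))
              by rw [← h]; abel]
          abel
        exact SS.ne_zero h4 hd0S h0
      · rw [show φ (x + s + s) - (φ x + (φ (x + s + s) - φ (x + s))) = φ (x + s) - φ x by abel]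
        exact hd0S
    have hy1 : (latticeGraph M).Adj (φ.symm (φ x + (φ (x + s + s) - φ (x + s)))) x := by
      refine (SimpleGraph.Iso.map_adj_iff φ).mp ?_
      rw [RelIso.apply_symm_apply]
      exact hz1
    have hy2 : (latticeGraph M).Adj (x + s + s) (φ.symm (φ x + (φ (x + s + s) - φ (x + s)))) := by
      refine (SimpleGraph.Iso.map_adj_iff φ).mp ?_
      rw [RelIso.apply_symm_apply]
      exact hz2
    have ha : φ.symm (φ x + (φ (x + s + s) - φ (x + s))) - x ∈ SS M := (adj_iff.mp hy1).2
    have hb : (x + s + s) - φ.symm (φ x + (φ (x + s + s) - φ (x + s))) ∈ SS M :=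
      (adj_iff.mp hy2).2
    have heq : s + s = (φ.symm (φ x + (φ (x + s + s) - φ (x + s))) - x)
        + ((x + s + s) - φ.symm (φ x + (φ (x + s + s) - φ (x + s)))) := by abel
    have hne : s ≠ -s := by
      intro h
      apply SS.add_self_ne_zero h4 hs
      nth_rewrite 2 [h]
      exact add_neg_cancel s
    have hy : φ.symm (φ x + (φ (x + s + s) - φ (x + s))) = x + s := by
      rcases key_s19 h4 hs hs ha hb heq hne with h | h
      · rw [sub_eq_iff_eq_add] at h
        rw [h]; abel
      · rw [sub_eq_iff_eq_add] at h
        have h2 : s + φ.symm (φ x + (φ (x + s + s) - φ (x + s))) = s + (x + s) := by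
          rw [← h]; abel
        exact add_left_cancel h2
    have hfinal : φ x + (φ (x + s + s) - φ (x + s)) = φ (x + s) := by
      have := congrArg φ hy
      rwa [RelIso.apply_symm_apply] at this
    exact eq_sub_of_add_eq' hfinal
  -- Step D: all shifts preserve local differences
  have hD : ∀ {t}, t ∈ SS M → ∀ (x : LatticeVertex M) {s}, s ∈ SS M →
      φ (x + t + s) - φ (x + t) = φ (x + s) - φ x := by
    intro t ht x s hs
    by_cases h1 : t = s
    · subst h1
      exact hC x ht
    by_cases h2 : t = -s
    · subst h2
      have e : x + -s + s = x := by abel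
      have e2 : x + -s + s + s = x + s := by abel
      have h := hC (x + -s) hs
      rw [e2, e] at h
      rw [e]
      exact h.symm
    · exact hB x hs ht h1 h2
  -- generation
  have hgen : ∀ x : LatticeVertex M, x ∈ AddSubgroup.closure (SS M) := gen_SS
  -- Step F: base-point independence
  have hF : ∀ (x : LatticeVertex M) {s}, s ∈ SS M → φ (x + s) = φ x + φ s := by
    intro x s hs
    have key2 : ∀ (y : LatticeVertex M), y ∈ AddSubgroup.closure (SS M) →
        ∀ z : LatticeVertex M, φ (z + y + s) - φ (z + y) = φ (z + s) - φ z := by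
      intro y hy
      refine AddSubgroup.closure_induction ?_ ?_ ?_ ?_ hy
      · intro t ht z
        exact hD ht z hs
      · intro z
        rw [add_zero]
      · intro y₁ y₂ _ _ ih₁ ih₂ z
        have e1 : z + (y₁ + y₂) + s = (z + y₁) + y₂ + s := by abel
        have e2 : z + (y₁ + y₂) = (z + y₁) + y₂ := by abel
        rw [e1, e2, ih₂ (z + y₁), ih₁ z]
      · intro y _ ih z
        have h := ih (z + -y)
        rw [show z + -y + y + s = z + s by abel, show z + -y + y = z by abel] at h
        exact h.symm
    have h := key2 x (hgen x) 0
    rw [zero_add, zero_add, hφ0, sub_zero] at h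
    rw [sub_eq_iff_eq_add] at h
    rw [h, add_comm]
  -- Step G: conclusion by induction on y
  intro x y
  have main : ∀ (y : LatticeVertex M), y ∈ AddSubgroup.closure (SS M) →
      ∀ x : LatticeVertex M, φ (x + y) = φ x + φ y := by
    intro y hy
    refine AddSubgroup.closure_induction ?_ ?_ ?_ ?_ hy
    · intro s hs x
      exact hF x hs
    · intro x
      rw [add_zero, hφ0, add_zero]
    · intro y₁ y₂ _ _ ih₁ ih₂ x
      have : φ (y₁ + y₂) = φ y₁ + φ y₂ := ih₂ y₁
      rw [show x + (y₁ + y₂) = (x + y₁) + y₂ by abel, ih₂ (x + y₁), ih₁ x, this, add_assoc]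
    · intro y _ ih x
      have hneg : φ (-y) = -φ y := by
        have h := ih (-y)
        rw [neg_add_cancel, hφ0] at h
        exact eq_neg_of_add_eq_zero_left h.symm
      have h2 := ih (x + -y)
      rw [show x + -y + y = x by abel] at h2
      rw [hneg]
      have h3 : φ (x + -y) = φ x - φ y := eq_sub_of_add_eq h2.symm
      rw [h3, sub_eq_add_neg]
  exact main y (hgen y) x
end
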